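/- For a connected fatgraph (combinatorial map) with v vertices, e edges, and r boundary components (faces), the genus g defined by 2 - 2g = v - e + r is a non-negative integer. -/

import Mathlib

section FatgraphAux

open Equiv Equiv.Perm

variable {H : Type*} [Fintype H] [DecidableEq H]

/-- merged relation -/
def mergeRel (r : H → H → Prop) (x y z w : H) : Prop :=
  r z w ∨ (r z x ∧ r y w) ∨ (r z y ∧ r x w)

omit [Fintype H] [DecidableEq H] in
lemma mergeRel.trans' {r : H → H → Prop} (hr : Equivalence r) {x y : H} :
    ∀ {z w v}, mergeRel r x y z w → mergeRel r x y w v → mergeRel r x y z v := by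
  rintro z w v (h | ⟨h1, h2⟩ | ⟨h1, h2⟩) (h' | ⟨h1', h2'⟩ | ⟨h1', h2'⟩)
  · exact Or.inl (hr.trans h h')
  · exact Or.inr (Or.inl ⟨hr.trans h h1', h2'⟩)
  · exact Or.inr (Or.inr ⟨hr.trans h h1', h2'⟩)
  · exact Or.inr (Or.inl ⟨h1, hr.trans h2 h'⟩)
  · exact Or.inl (hr.trans h1 (hr.trans (hr.symm (hr.trans h2 h1')) h2'))
  · exact Or.inl (hr.trans h1 h2')
  · exact Or.inr (Or.inr ⟨h1, hr.trans h2 h'⟩)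
  · exact Or.inl (hr.trans h1 h2')
  · exact Or.inl (hr.trans h1 (hr.trans (hr.symm (hr.trans h2 h1')) h2'))

omit [Fintype H] [DecidableEq H] in
lemma mergeRel.symm' {r : H → H → Prop} (hr : Equivalence r) {x y : H} :
    ∀ {z w}, mergeRel r x y z w → mergeRel r x y w z := by
  rintro z w (h | ⟨h1, h2⟩ | ⟨h1, h2⟩)
  · exact Or.inl (hr.symm h)
  · exact Or.inr (Or.inr ⟨hr.symm h2, hr.symm h1⟩)
  · exact Or.inr (Or.inl ⟨hr.symm h2, hr.symm h1⟩)

/-- Counting: quotient by a finer relation has at least as many classes. -/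
lemma card_quot_le {r r' : Setoid H} (h : ∀ z w, r.r z w → r'.r z w) :
    Nat.card (Quotient r') ≤ Nat.card (Quotient r) := by
  have hsurj : Function.Surjective (Quotient.map' (id : H → H) h :
      Quotient r → Quotient r') := by
    rintro ⟨z⟩
    exact ⟨Quotient.mk r z, rfl⟩
  exact Nat.card_le_card_of_surjective _ hsurj

lemma card_quot_congr {r r' : Setoid H} (h : ∀ z w, r.r z w ↔ r'.r z w) :
    Nat.card (Quotient r) = Nat.card (Quotient r') :=
  le_antisymm (card_quot_le fun z w hz => (h z w).2 hz)
    (card_quot_le fun z w hz => (h z w).1 hz)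

/-- Counting: merging two distinct classes drops the count by exactly one. -/
lemma card_quot_merge {r r' : Setoid H} {x y : H} (hxy : ¬ r.r x y)
    (char : ∀ z w, r'.r z w ↔ mergeRel r.r x y z w) :
    Nat.card (Quotient r) = Nat.card (Quotient r') + 1 := by
  classical
  have e : Quotient r ≃ Option (Quotient r') := by
    refine Equiv.ofBijective (Quotient.lift (fun z => if r.r y z then none else
      some (Quotient.mk r' z)) ?_) ⟨?_, ?_⟩
    · intro z w hzw
      by_cases hz : r.r y z
      · have hc : r.r y w := r.trans hz hzw
        rw [if_pos hz, if_pos hc]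
      · have hw : ¬ r.r y w := fun hw => hz (r.trans hw (r.symm hzw))
        rw [if_neg hz, if_neg hw]
        exact congrArg some (Quotient.sound ((char z w).2 (Or.inl hzw)))
    · rintro ⟨z⟩ ⟨w⟩ hzw
      replace hzw : (if r.r y z then none else some (Quotient.mk r' z)) =
          (if r.r y w then none else some (Quotient.mk r' w)) := hzw
      by_cases hz : r.r y z <;> by_cases hw : r.r y w
      · exact Quotient.sound (r.trans (r.symm hz) hw)
      · rw [if_pos hz, if_neg hw] at hzw; exact absurd hzw (by simp)
      · rw [if_neg hz, if_pos hw] at hzw; exact absurd hzw (by simp)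
      · rw [if_neg hz, if_neg hw] at hzw
        rcases (char z w).1 (Quotient.exact (Option.some.inj hzw)) with h | ⟨h1, h2⟩ | ⟨h1, h2⟩
        · exact Quotient.sound h
        · exact absurd h2 hw
        · exact absurd (r.symm h1) hz
    · rintro (_ | ⟨⟨w⟩⟩)
      · have hc : r.r y y := r.refl y
        exact ⟨Quotient.mk r y, by rw [Quotient.lift_mk, if_pos hc]⟩
      · by_cases hw : r.r y w
        · refine ⟨Quotient.mk r x, ?_⟩
          have hyx : ¬ r.r y x := fun h => hxy (r.symm h)
          rw [Quotient.lift_mk, if_neg hyx]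
          exact congrArg some (Quotient.sound ((char x w).2 (Or.inr (Or.inl ⟨r.refl x, hw⟩))))
        · exact ⟨Quotient.mk r w, by show (if r.r y w then _ else _) = _; rw [if_neg hw]; rfl⟩

  have e2 : Option (Quotient r') ≃ (Quotient r') ⊕ PUnit.{1} := Equiv.optionEquivSumPUnit _
  rw [Nat.card_congr (e.trans e2), Nat.card_sum]
  simp

/-- The orbit equivalence relation of the subgroup generated by `S`. -/
def relS (S : Set (Equiv.Perm H)) : Setoid H where
  r x y := ∃ w ∈ Subgroup.closure S, w x = y
  iseqv := by
    constructor
    · exact fun x => ⟨1, Subgroup.one_mem _, rfl⟩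
    · rintro x y ⟨w, hw, rfl⟩
      exact ⟨w⁻¹, Subgroup.inv_mem _ hw, by simp⟩
    · rintro x y z ⟨w, hw, rfl⟩ ⟨v, hv, rfl⟩
      exact ⟨v * w, Subgroup.mul_mem _ hv hw, rfl⟩

/-- Number of orbits of the subgroup generated by `S`. -/
noncomputable def orbS (S : Set (Equiv.Perm H)) : ℕ := Nat.card (Quotient (relS S))

lemma relS_mono {S T : Set (Equiv.Perm H)} (h : Subgroup.closure S ≤ Subgroup.closure T) :
    ∀ z w, (relS S).r z w → (relS T).r z w := by
  rintro z w ⟨g, hg, rfl⟩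
  exact ⟨g, h hg, rfl⟩

lemma orbS_mono {S T : Set (Equiv.Perm H)} (h : Subgroup.closure S ≤ Subgroup.closure T) :
    orbS T ≤ orbS S :=
  card_quot_le (relS_mono h)

/-- Characterization of the orbit relation after adding a swap to the generating set. -/
lemma relS_insert_swap (S : Set (Equiv.Perm H)) (x y : H) :
    ∀ z w, (relS (insert (Equiv.swap x y) S)).r z w ↔ mergeRel (relS S).r x y z w := by
  have hequiv : Equivalence (relS S).r := (relS S).iseqv
  intro z w
  constructor
  · rintro ⟨g, hg, rfl⟩
    revert z
    induction hg using Subgroup.closure_induction with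
    | mem g hgmem =>
      intro z
      rcases hgmem with rfl | hgS
      · rcases eq_or_ne z x with rfl | hzx
        · rw [Equiv.swap_apply_left]
          exact Or.inr (Or.inl ⟨hequiv.refl _, hequiv.refl _⟩)
        · rcases eq_or_ne z y with rfl | hzy
          · rw [Equiv.swap_apply_right]
            exact Or.inr (Or.inr ⟨hequiv.refl _, hequiv.refl _⟩)
          · rw [Equiv.swap_apply_of_ne_of_ne hzx hzy]
            exact Or.inl (hequiv.refl _)
      · exact Or.inl ⟨g, Subgroup.subset_closure hgS, rfl⟩
    | one => exact fun z => Or.inl (hequiv.refl _)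
    | mul g h _ _ hgP hhP =>
      intro z
      have h1 := hhP z
      have h2 := hgP (h z)
      exact mergeRel.trans' hequiv h1 (by simpa using h2)
    | inv g _ hgP =>
      intro z
      have := hgP (g⁻¹ z)
      simp only [Equiv.Perm.inv_def, Equiv.apply_symm_apply] at this
      exact mergeRel.symm' hequiv this
  · rintro (⟨g, hg, rfl⟩ | ⟨⟨g1, hg1, hg1e⟩, ⟨g2, hg2, rfl⟩⟩ | ⟨⟨g1, hg1, hg1e⟩, ⟨g2, hg2, rfl⟩⟩)
    · exact ⟨g, Subgroup.closure_mono (Set.subset_insert _ _) hg, rfl⟩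
    · refine ⟨g2 * Equiv.swap x y * g1, ?_, ?_⟩
      · exact Subgroup.mul_mem _ (Subgroup.mul_mem _
          (Subgroup.closure_mono (Set.subset_insert _ _) hg2)
          (Subgroup.subset_closure (Set.mem_insert _ _)))
          (Subgroup.closure_mono (Set.subset_insert _ _) hg1)
      · rw [Equiv.Perm.mul_apply, Equiv.Perm.mul_apply, hg1e, Equiv.swap_apply_left]
    · refine ⟨g2 * Equiv.swap x y * g1, ?_, ?_⟩
      · exact Subgroup.mul_mem _ (Subgroup.mul_mem _
          (Subgroup.closure_mono (Set.subset_insert _ _) hg2)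
          (Subgroup.subset_closure (Set.mem_insert _ _)))
          (Subgroup.closure_mono (Set.subset_insert _ _) hg1)
      · rw [Equiv.Perm.mul_apply, Equiv.Perm.mul_apply, hg1e, Equiv.swap_apply_right]

lemma orbS_insert_swap_of_rel {S : Set (Equiv.Perm H)} {x y : H} (h : (relS S).r x y) :
    orbS (insert (Equiv.swap x y) S) = orbS S := by
  have hequiv : Equivalence (relS S).r := (relS S).iseqv
  refine card_quot_congr fun z w => (relS_insert_swap S x y z w).trans ?_
  constructor
  · rintro (hzw | ⟨h1, h2⟩ | ⟨h1, h2⟩)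
    · exact hzw
    · exact hequiv.trans h1 (hequiv.trans h h2)
    · exact hequiv.trans h1 (hequiv.trans (hequiv.symm h) h2)
  · exact Or.inl

lemma orbS_le_insert_swap (S : Set (Equiv.Perm H)) (x y : H) :
    orbS S ≤ orbS (insert (Equiv.swap x y) S) + 1 := by
  by_cases h : (relS S).r x y
  · rw [orbS_insert_swap_of_rel h]
    exact Nat.le_succ _
  · exact le_of_eq (card_quot_merge h (relS_insert_swap S x y))

/-- The same-cycle setoid of a permutation. -/
def scSetoid (π : Equiv.Perm H) : Setoid H :=
  ⟨π.SameCycle, ⟨Equiv.Perm.SameCycle.refl π, Equiv.Perm.SameCycle.symm,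
    Equiv.Perm.SameCycle.trans⟩⟩

/-- The number of cycles (orbits) of a permutation, as a `Nat.card` of the quotient. -/
noncomputable def ncc (π : Equiv.Perm H) : ℕ := Nat.card (Quotient (scSetoid π))

lemma sameCycle_of_pow {π : Equiv.Perm H} {z w : H} {k : ℕ} (h : (π ^ k) z = w) :
    π.SameCycle z w := ⟨(k : ℤ), by rw [zpow_natCast, h]⟩

lemma eq_of_fixed_of_sameCycle {π : Equiv.Perm H} {z w : H} (hz : π z = z)
    (h : π.SameCycle z w) : w = z := by
  obtain ⟨k, hk⟩ := h
  rw [Equiv.Perm.zpow_apply_eq_self_of_apply_eq_self hz k] at hk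
  exact hk.symm

/-- After multiplying by `swap x y`, disjoint cycles through `x` and `y` merge. -/
lemma sameCycle_mul_swap_self {π : Equiv.Perm H} {x y : H} (hxy : x ≠ y)
    (h : ¬ π.SameCycle x y) : (π * Equiv.swap x y).SameCycle x y := by
  by_contra h'
  set τ := Equiv.swap x y with hτ
  have key : ∀ k : ℕ, ((π * τ) ^ (k + 1)) x = (π ^ (k + 1)) y := by
    intro k
    induction k with
    | zero => simp [τ, Equiv.Perm.mul_apply, Equiv.swap_apply_left]
    | succ k ih =>
      have hne_x : (π ^ (k + 1)) y ≠ x := fun he => h (sameCycle_of_pow he).symm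
      rcases eq_or_ne ((π ^ (k + 1)) y) y with he | hne_y
      · exact absurd (sameCycle_of_pow (ih.trans he)) h'
      · rw [pow_succ' (π * τ) (k + 1), Equiv.Perm.mul_apply, ih,
          pow_succ' π (k + 1), Equiv.Perm.mul_apply, Equiv.Perm.mul_apply,
          Equiv.swap_apply_of_ne_of_ne hne_x hne_y]
  have hN : 0 < orderOf (π * τ) := orderOf_pos _
  obtain ⟨N, hN'⟩ : ∃ N, orderOf (π * τ) = N + 1 := ⟨orderOf (π * τ) - 1, by omega⟩
  have := key N
  rw [← hN', pow_orderOf_eq_one (π * τ)] at this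
  exact h (sameCycle_of_pow this.symm).symm

/-- After multiplying by `swap x y`, a cycle through both `x` and `y` splits. -/
lemma not_sameCycle_mul_swap_self {π : Equiv.Perm H} {x y : H} (hxy : x ≠ y)
    (h : π.SameCycle x y) : ¬ (π * Equiv.swap x y).SameCycle x y := by
  intro hcon
  set τ := Equiv.swap x y with hτ
  have hex : ∃ j : ℕ, 0 < j ∧ (π ^ j) y = x := by
    obtain ⟨j, hj1, _, hj2⟩ := Equiv.Perm.SameCycle.exists_pow_eq π h.symm
    exact ⟨j, hj1, hj2⟩
  classical
  set j := Nat.find hex with hjdef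
  obtain ⟨hjpos, hjx⟩ : 0 < j ∧ (π ^ j) y = x := Nat.find_spec hex
  have fact1 : ∀ k, 0 < k → k < j → (π ^ k) y ≠ x := fun k h1 h2 he =>
    Nat.find_min hex h2 ⟨h1, he⟩
  have fact2 : ∀ k, 0 < k → k < j → (π ^ k) y ≠ y := by
    intro k h1 h2 he
    refine fact1 (j - k) (by omega) (by omega) ?_
    have : (π ^ (j - k)) ((π ^ k) y) = (π ^ j) y := by
      rw [← Equiv.Perm.mul_apply, ← pow_add]
      congr 2
      omega
    rw [he] at this
    rw [this, hjx]
  have key : ∀ k, 0 < k → k ≤ j → ((π * τ) ^ k) x = (π ^ k) y := by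
    intro k
    induction k with
    | zero => omega
    | succ k ih =>
      intro _ hk1
      rcases Nat.eq_zero_or_pos k with rfl | hkpos
      · simp [τ, Equiv.Perm.mul_apply, Equiv.swap_apply_left]
      · have hu := ih hkpos (by omega)
        rw [pow_succ' (π * τ) k, Equiv.Perm.mul_apply, hu,
          pow_succ' π k, Equiv.Perm.mul_apply, Equiv.Perm.mul_apply,
          Equiv.swap_apply_of_ne_of_ne (fact1 k hkpos (by omega)) (fact2 k hkpos (by omega))]
  have hfix : ((π * τ) ^ j) x = x := by rw [key j hjpos le_rfl, hjx]
  obtain ⟨m, hm0, _, hm⟩ := Equiv.Perm.SameCycle.exists_pow_eq (π * τ) hcon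
  have hmulfix : ((π * τ) ^ (j * (m / j))) x = x := by
    rw [pow_mul]
    have := Equiv.Perm.zpow_apply_eq_self_of_apply_eq_self (f := (π * τ) ^ j) hfix
      ((m / j : ℕ) : ℤ)
    rwa [zpow_natCast] at this
  have hmod : ((π * τ) ^ (m % j)) x = y := by
    have h2 : ((π * τ) ^ (m % j + j * (m / j))) x = ((π * τ) ^ (m % j)) x := by
      rw [pow_add, Equiv.Perm.mul_apply, hmulfix]
    rw [← h2, Nat.mod_add_div m j, hm]
  rcases Nat.eq_zero_or_pos (m % j) with hr | hr
  · rw [hr, pow_zero] at hmod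
    exact hxy hmod
  · have hrj : m % j < j := Nat.mod_lt _ hjpos
    rw [key _ hr (le_of_lt hrj)] at hmod
    exact fact2 _ hr hrj hmod

/-- Cycle structure of `π * swap x y` when `x`, `y` lie in distinct cycles of `π`:
the two cycles merge and all other cycles are unchanged. -/
lemma sameCycle_mul_swap_iff {π : Equiv.Perm H} {x y : H} (h : ¬ π.SameCycle x y) (z w : H) :
    (π * Equiv.swap x y).SameCycle z w ↔ mergeRel π.SameCycle x y z w := by
  have hxy : x ≠ y := fun he => h (he ▸ Equiv.Perm.SameCycle.refl π x)
  set τ := Equiv.swap x y with hτ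
  have hequiv : Equivalence π.SameCycle :=
    ⟨Equiv.Perm.SameCycle.refl π, Equiv.Perm.SameCycle.symm, Equiv.Perm.SameCycle.trans⟩
  have hxy' : (π * τ).SameCycle x y := sameCycle_mul_swap_self hxy h
  constructor
  · intro hzw
    obtain ⟨m, hm1, hm2, hm⟩ := Equiv.Perm.SameCycle.exists_pow_eq (π * τ) hzw
    rw [← hm]
    clear hm1 hm2
    have single : ∀ u, mergeRel π.SameCycle x y u ((π * τ) u) := by
      intro u
      rcases eq_or_ne u x with rfl | hux
      · rw [Equiv.Perm.mul_apply, Equiv.swap_apply_left]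
        exact Or.inr (Or.inl ⟨hequiv.refl _, sameCycle_of_pow (k := 1) (by simp)⟩)
      · rcases eq_or_ne u y with rfl | huy
        · rw [Equiv.Perm.mul_apply, Equiv.swap_apply_right]
          exact Or.inr (Or.inr ⟨hequiv.refl _, sameCycle_of_pow (k := 1) (by simp)⟩)
        · rw [Equiv.Perm.mul_apply, Equiv.swap_apply_of_ne_of_ne hux huy]
          exact Or.inl (sameCycle_of_pow (k := 1) (by simp))
    clear hm
    induction m with
    | zero => exact Or.inl (by simp [hequiv.refl])
    | succ m ih =>
      rw [pow_succ' (π * τ) m, Equiv.Perm.mul_apply]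
      exact mergeRel.trans' hequiv ih (single _)
  · -- helpers for the reverse direction
    have out : ∀ z, ¬ π.SameCycle z x → ¬ π.SameCycle z y →
        ∀ k : ℕ, ((π * τ) ^ k) z = (π ^ k) z := by
      intro z hzx hzy k
      induction k with
      | zero => simp
      | succ k ih =>
        have h1 : (π ^ k) z ≠ x := fun he => hzx ((sameCycle_of_pow he))
        have h2 : (π ^ k) z ≠ y := fun he => hzy ((sameCycle_of_pow he))
        rw [pow_succ' (π * τ) k, Equiv.Perm.mul_apply, ih, pow_succ' π k,
          Equiv.Perm.mul_apply, Equiv.Perm.mul_apply,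
          Equiv.swap_apply_of_ne_of_ne h1 h2]
    have transfer_out : ∀ z w, ¬ π.SameCycle z x → ¬ π.SameCycle z y →
        π.SameCycle z w → (π * τ).SameCycle z w := by
      intro z w hzx hzy hzw
      obtain ⟨m, _, _, hm⟩ := Equiv.Perm.SameCycle.exists_pow_eq π hzw
      exact sameCycle_of_pow (k := m) (by rw [out z hzx hzy m, hm])
    have inX : ∀ k : ℕ, (π * τ).SameCycle x ((π ^ k) x) := by
      intro k
      induction k with
      | zero => simpa using Equiv.Perm.SameCycle.refl (π * τ) x
      | succ k ih =>
        rw [pow_succ' π k, Equiv.Perm.mul_apply]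
        rcases eq_or_ne ((π ^ k) x) x with he | hne_x
        · rw [he]
          have : π x = (π * τ) y := by rw [Equiv.Perm.mul_apply, Equiv.swap_apply_right]
          rw [this]
          exact hxy'.trans (sameCycle_of_pow (k := 1) (by simp))
        · rcases eq_or_ne ((π ^ k) x) y with he | hne_y
          · rw [he]
            have : π y = (π * τ) x := by rw [Equiv.Perm.mul_apply, Equiv.swap_apply_left]
            rw [this]
            exact sameCycle_of_pow (k := 1) (by simp)
          · have : π ((π ^ k) x) = (π * τ) ((π ^ k) x) := by
              rw [Equiv.Perm.mul_apply, Equiv.swap_apply_of_ne_of_ne hne_x hne_y]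
            rw [this]
            exact ih.trans (sameCycle_of_pow (k := 1) (by simp))
    have inY : ∀ k : ℕ, (π * τ).SameCycle y ((π ^ k) y) := by
      intro k
      induction k with
      | zero => simpa using Equiv.Perm.SameCycle.refl (π * τ) y
      | succ k ih =>
        rw [pow_succ' π k, Equiv.Perm.mul_apply]
        rcases eq_or_ne ((π ^ k) y) y with he | hne_y
        · rw [he]
          have : π y = (π * τ) x := by rw [Equiv.Perm.mul_apply, Equiv.swap_apply_left]
          rw [this]
          exact hxy'.symm.trans (sameCycle_of_pow (k := 1) (by simp))
        · rcases eq_or_ne ((π ^ k) y) x with he | hne_x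
          · rw [he]
            have : π x = (π * τ) y := by rw [Equiv.Perm.mul_apply, Equiv.swap_apply_right]
            rw [this]
            exact sameCycle_of_pow (k := 1) (by simp)
          · have : π ((π ^ k) y) = (π * τ) ((π ^ k) y) := by
              rw [Equiv.Perm.mul_apply, Equiv.swap_apply_of_ne_of_ne hne_x hne_y]
            rw [this]
            exact ih.trans (sameCycle_of_pow (k := 1) (by simp))
    have inXall : ∀ u, π.SameCycle x u → (π * τ).SameCycle x u := by
      intro u hu
      obtain ⟨m, _, _, hm⟩ := Equiv.Perm.SameCycle.exists_pow_eq π hu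
      exact hm ▸ inX m
    have inYall : ∀ u, π.SameCycle y u → (π * τ).SameCycle y u := by
      intro u hu
      obtain ⟨m, _, _, hm⟩ := Equiv.Perm.SameCycle.exists_pow_eq π hu
      exact hm ▸ inY m
    rintro (hzw | ⟨h1, h2⟩ | ⟨h1, h2⟩)
    · by_cases hzx : π.SameCycle z x
      · exact ((inXall z hzx.symm).symm).trans (inXall w (hzx.symm.trans hzw))
      · by_cases hzy : π.SameCycle z y
        · exact ((inYall z hzy.symm).symm).trans (inYall w (hzy.symm.trans hzw))
        · exact transfer_out z w hzx hzy hzw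
    · exact ((inXall z h1.symm).symm).trans (hxy'.trans (inYall w h2))
    · exact ((inYall z h1.symm).symm).trans (hxy'.symm.trans (inXall w h2))

/-- Merging two cycles drops the cycle count by exactly one. -/
lemma ncc_mul_swap {π : Equiv.Perm H} {x y : H} (h : ¬ π.SameCycle x y) :
    ncc π = ncc (π * Equiv.swap x y) + 1 :=
  card_quot_merge (r := scSetoid π) (r' := scSetoid (π * Equiv.swap x y)) h
    (sameCycle_mul_swap_iff h)

/-- Multiplying by a swap changes the cycle count by at most one (upward). -/
lemma ncc_mul_swap_le (π : Equiv.Perm H) {x y : H} (hxy : x ≠ y) :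
    ncc (π * Equiv.swap x y) ≤ ncc π + 1 := by
  by_cases h : π.SameCycle x y
  · have h2 := ncc_mul_swap (not_sameCycle_mul_swap_self hxy h)
    rw [mul_assoc, Equiv.swap_mul_self, mul_one] at h2
    omega
  · have := ncc_mul_swap h
    omega

lemma sc_to_rel {S : Set (Equiv.Perm H)} {π : Equiv.Perm H} (hπ : π ∈ Subgroup.closure S)
    {z w : H} (h : π.SameCycle z w) : (relS S).r z w := by
  obtain ⟨k, hk⟩ := h
  exact ⟨π ^ k, Subgroup.zpow_mem _ hπ k, hk⟩

lemma ncc_one : ncc (1 : Equiv.Perm H) = Fintype.card H := by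
  have e : Quotient (scSetoid (1 : Equiv.Perm H)) ≃ H := by
    refine ⟨Quotient.lift id fun z w h => ?_, Quotient.mk _, fun q => ?_, fun z => rfl⟩
    · obtain ⟨k, hk⟩ := h
      rw [one_zpow] at hk
      exact hk
    · induction q using Quotient.ind
      rfl
  rw [ncc, Nat.card_congr e, Nat.card_eq_fintype_card]

lemma ncc_le_orbS_one_insert (α : Equiv.Perm H) : ncc α ≤ orbS {1, α} := by
  refine card_quot_le fun z w => ?_
  rintro ⟨g, hg, rfl⟩
  have hle : Subgroup.closure ({1, α} : Set (Equiv.Perm H)) ≤ Subgroup.closure {α} := by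
    rw [Subgroup.closure_le]
    rintro u (rfl | rfl)
    · exact Subgroup.one_mem _
    · exact Subgroup.subset_closure rfl
  obtain ⟨n, hn⟩ := Subgroup.mem_closure_singleton.1 (hle hg)
  exact ⟨n, by rw [hn]⟩

/-- Main inequality: for any two permutations, the sum of cycle counts of `σ`, `α`, `α * σ`
is at most `|H|` plus twice the number of orbits of `⟨σ, α⟩`. -/
lemma main_ineq (α : Equiv.Perm H) :
    ∀ σ : Equiv.Perm H, ncc σ + ncc α + ncc (α * σ) ≤
      Fintype.card H + 2 * orbS {σ, α} := by
  suffices h : ∀ (m : ℕ) (σ : Equiv.Perm H), σ.support.card < m →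
      ncc σ + ncc α + ncc (α * σ) ≤ Fintype.card H + 2 * orbS {σ, α} from
    fun σ => h (σ.support.card + 1) σ (Nat.lt_succ_self _)
  intro m
  induction m with
  | zero => exact fun σ h => absurd h (Nat.not_lt_zero _)
  | succ m ih =>
    intro σ hcard
    by_cases h1 : σ = 1
    · subst h1
      rw [mul_one, ncc_one]
      have h2 := ncc_le_orbS_one_insert α
      omega
    · have hex : ∃ x, σ x ≠ x := by
        by_contra hc
        push_neg at hc
        exact h1 (Equiv.ext fun z => by rw [hc z, Equiv.Perm.one_apply])
      obtain ⟨x, hx⟩ := hex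
      set y := σ x with hy
      have hxy : x ≠ y := fun he => hx he.symm
      set τ := Equiv.swap x y with hτ
      set σ' := σ * τ with hσ'
      have hσ'y : σ' y = y := by
        rw [hσ', Equiv.Perm.mul_apply, hτ, Equiv.swap_apply_right, hy]
      have hστ : σ' * τ = σ := by rw [hσ', mul_assoc, hτ, Equiv.swap_mul_self, mul_one]
      have hns : ¬ σ'.SameCycle x y := fun hc => hxy (eq_of_fixed_of_sameCycle hσ'y hc.symm)
      have hncc : ncc σ' = ncc σ + 1 := by
        have h2 := ncc_mul_swap hns
        rwa [hστ] at h2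
      have hlt : σ'.support.card < σ.support.card := by
        have hform : σ' = Equiv.swap y (σ y) * σ := by
          rw [hσ', hτ, Equiv.mul_swap_eq_swap_mul]
        have hyne : σ y ≠ y := by
          intro he
          have h3 : σ (σ x) = σ x := by rw [← hy]; exact he
          exact hx (σ.injective h3)
        rw [hform]
        exact Equiv.Perm.card_support_swap_mul hyne
      have ihσ' := ih σ' (by omega)
      set γ' := α * σ' with hγ'
      have hγ : γ' * τ = α * σ := by rw [hγ', hσ', mul_assoc, mul_assoc, hτ,
        Equiv.swap_mul_self, mul_one]
      have hmono : orbS (insert τ {σ', α}) ≤ orbS {σ, α} := by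
        refine orbS_mono ?_
        rw [Subgroup.closure_le]
        rintro u (rfl | rfl)
        · rw [← hστ]
          exact Subgroup.mul_mem _
            (Subgroup.subset_closure (Set.mem_insert_of_mem _ (Set.mem_insert _ _)))
            (Subgroup.subset_closure (Set.mem_insert _ _))
        · exact Subgroup.subset_closure
            (Set.mem_insert_of_mem _ (Set.mem_insert_of_mem _ rfl))
      by_cases hA : (relS ({σ', α} : Set (Equiv.Perm H))).r x y
      · have horb : orbS ({σ', α} : Set (Equiv.Perm H)) ≤ orbS {σ, α} := by
          rw [← orbS_insert_swap_of_rel hA]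
          exact hmono
        have hγle : ncc (α * σ) ≤ ncc γ' + 1 := by
          have h2 := ncc_mul_swap_le γ' hxy
          rwa [← hτ, hγ] at h2
        omega
      · have hαmem : α ∈ Subgroup.closure ({σ', α} : Set (Equiv.Perm H)) :=
          Subgroup.subset_closure (Set.mem_insert_of_mem _ rfl)
        have hσ'mem : σ' ∈ Subgroup.closure ({σ', α} : Set (Equiv.Perm H)) :=
          Subgroup.subset_closure (Set.mem_insert _ _)
        have hγmem : γ' ∈ Subgroup.closure ({σ', α} : Set (Equiv.Perm H)) := by
          rw [hγ']
          exact Subgroup.mul_mem _ hαmem hσ'mem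
        have hnsγ : ¬ γ'.SameCycle x y := fun hc => hA (sc_to_rel hγmem hc)
        have hγncc : ncc γ' = ncc (α * σ) + 1 := by
          have h2 := ncc_mul_swap hnsγ
          rwa [← hτ, hγ] at h2
        have horb2 := orbS_le_insert_swap ({σ', α} : Set (Equiv.Perm H)) x y
        rw [← hτ] at horb2
        omega

/-- The ad-hoc cycle count `(|H| - |supp|) + #cycleType` agrees with the orbit count. -/
lemma cycleCount_eq_ncc (π : Equiv.Perm H) :
    (Fintype.card H - π.support.card) + Multiset.card π.cycleType = ncc π := by
  classical
  have e : Quotient (scSetoid π) ≃ ({z // π z = z} ⊕ {c // c ∈ π.cycleFactorsFinset}) := by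
    refine Equiv.ofBijective (Quotient.lift (fun z => if h : π z = z then Sum.inl ⟨z, h⟩ else
      Sum.inr ⟨π.cycleOf z, Equiv.Perm.cycleOf_mem_cycleFactorsFinset_iff.2
        (Equiv.Perm.mem_support.2 h)⟩) ?_) ⟨?_, ?_⟩
    · intro z w hzw
      by_cases hz : π z = z
      · have : w = z := eq_of_fixed_of_sameCycle hz hzw
        subst this
        rfl
      · have hw : ¬ π w = w := fun hw => hz (by
          have h9 : z = w := eq_of_fixed_of_sameCycle hw hzw.symm
          rw [h9]
          exact hw)
        rw [dif_neg hz, dif_neg hw]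
        exact congrArg Sum.inr (Subtype.ext (Equiv.Perm.SameCycle.cycleOf_eq hzw))
    · rintro ⟨z⟩ ⟨w⟩ hzw
      replace hzw : (if h : π z = z then
          (Sum.inl ⟨z, h⟩ : {z // π z = z} ⊕ {c // c ∈ π.cycleFactorsFinset}) else
          Sum.inr ⟨π.cycleOf z, Equiv.Perm.cycleOf_mem_cycleFactorsFinset_iff.2
            (Equiv.Perm.mem_support.2 h)⟩) = (if h : π w = w then Sum.inl ⟨w, h⟩ else
          Sum.inr ⟨π.cycleOf w, Equiv.Perm.cycleOf_mem_cycleFactorsFinset_iff.2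
            (Equiv.Perm.mem_support.2 h)⟩) := hzw
      by_cases hz : π z = z <;> by_cases hw : π w = w
      · rw [dif_pos hz, dif_pos hw] at hzw
        cases hzw
        exact Quotient.sound (Equiv.Perm.SameCycle.refl π z)
      · rw [dif_pos hz, dif_neg hw] at hzw
        exact absurd hzw (by simp)
      · rw [dif_neg hz, dif_pos hw] at hzw
        exact absurd hzw (by simp)
      · rw [dif_neg hz, dif_neg hw] at hzw
        have hco : π.cycleOf z = π.cycleOf w := by
            have := Sum.inr_injective hzw
            exact Subtype.ext_iff.1 this
        have hwmem : w ∈ (π.cycleOf z).support := by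
          rw [hco]
          exact (Equiv.Perm.mem_support_cycleOf_iff' hw).2 (Equiv.Perm.SameCycle.refl π w)
        exact Quotient.sound ((Equiv.Perm.mem_support_cycleOf_iff' hz).1 hwmem)
    · rintro (⟨z, hz⟩ | ⟨c, hc⟩)
      · exact ⟨Quotient.mk _ z, by show (if h : π z = z then _ else _) = _; rw [dif_pos hz]⟩
      · obtain ⟨z, hzc⟩ := ((Equiv.Perm.mem_cycleFactorsFinset_iff.1 hc).1).nonempty_support
        have hzπ : ¬ π z = z :=
          Equiv.Perm.mem_support.1 (Equiv.Perm.mem_cycleFactorsFinset_support_le hc hzc)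
        refine ⟨Quotient.mk _ z, ?_⟩
        show (if h : π z = z then _ else _) = _
        rw [dif_neg hzπ]
        exact congrArg Sum.inr (Subtype.ext (Equiv.Perm.cycle_is_cycleOf hzc hc).symm)
  rw [ncc, Nat.card_congr e, Nat.card_sum, Nat.card_eq_fintype_card, Nat.card_eq_fintype_card]
  have h1 : Fintype.card {z // π z = z} = Fintype.card H - π.support.card := by
    rw [Fintype.card_subtype]
    have h2 := Finset.card_filter_add_card_filter_not
      (s := (Finset.univ : Finset H)) (p := fun z => π z = z)
    have h3 : Finset.univ.filter (fun z => ¬ π z = z) = π.support := by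
      ext z
      simp [Equiv.Perm.mem_support]
    rw [h3] at h2
    have h4 : π.support.card ≤ Fintype.card H := Finset.card_le_univ _
    have h6 : (Finset.univ : Finset H).card = Fintype.card H := Finset.card_univ
    omega
  have h5 : Fintype.card {c // c ∈ π.cycleFactorsFinset} = Multiset.card π.cycleType := by
    rw [Equiv.Perm.cycleType_def, Multiset.card_map]
    exact Fintype.card_coe _
  omega

/-- A fixed-point-free involution has `|H| / 2` cycles, all of length 2. -/
lemma involution_card {a : Equiv.Perm H} [Nonempty H] (hinv : a * a = 1)
    (hfpf : ∀ z, a z ≠ z) :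
    2 * Multiset.card a.cycleType = Fintype.card H ∧ a.support = Finset.univ := by
  have hsupp : a.support = Finset.univ := by
    ext z
    simp [Equiv.Perm.mem_support, hfpf z]
  have hne : a ≠ 1 := by
    intro h
    exact hfpf (Classical.arbitrary H) (by rw [h]; rfl)
  have horder : orderOf a = 2 := by
    have h2 : a ^ 2 = 1 := by rw [sq]; exact hinv
    exact orderOf_eq_prime h2 hne
  have hall : ∀ t ∈ a.cycleType, t = 2 := by
    intro t ht
    have h2 : 2 ≤ t := Equiv.Perm.two_le_of_mem_cycleType ht
    have h3 : t ∣ 2 := by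
      rw [← horder, ← Equiv.Perm.lcm_cycleType]
      exact Multiset.dvd_lcm ht
    have h4 : t ≤ 2 := Nat.le_of_dvd (by norm_num) h3
    omega
  have hsum : a.cycleType.sum = Fintype.card H := by
    rw [Equiv.Perm.sum_cycleType, hsupp, Finset.card_univ]
  have hrepl : a.cycleType = Multiset.replicate (Multiset.card a.cycleType) 2 :=
    Multiset.eq_replicate_card.2 hall
  constructor
  · rw [← hsum]
    conv_rhs => rw [hrepl]
    rw [Multiset.sum_replicate, smul_eq_mul, mul_comm]
  · exact hsupp

/-- Parity: the sum of the three `cycleType` weights is even. -/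
lemma parity_lemma (σ α : Equiv.Perm H) :
    Even ((α * σ).cycleType.sum + Multiset.card (α * σ).cycleType +
      (α.cycleType.sum + Multiset.card α.cycleType) +
      (σ.cycleType.sum + Multiset.card σ.cycleType)) := by
  set eσ := σ.cycleType.sum + Multiset.card σ.cycleType
  set eα := α.cycleType.sum + Multiset.card α.cycleType
  set eγ := (α * σ).cycleType.sum + Multiset.card (α * σ).cycleType
  have hsign : Equiv.Perm.sign (α * σ) = Equiv.Perm.sign α * Equiv.Perm.sign σ :=
    Equiv.Perm.sign_mul α σ
  rw [Equiv.Perm.sign_of_cycleType, Equiv.Perm.sign_of_cycleType,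
    Equiv.Perm.sign_of_cycleType, ← pow_add] at hsign
  have hone : ((-1 : ℤˣ)) ^ (eγ + (eα + eσ)) = 1 := by
    rw [pow_add, hsign, ← pow_add, ← two_mul, pow_mul, Int.units_sq, one_pow]
  rcases Nat.even_or_odd (eγ + (eα + eσ)) with he | ho
  · have hq : eγ + eα + eσ = eγ + (eα + eσ) := by omega
    rw [hq]
    exact he
  · rw [ho.neg_one_pow] at hone
    exact absurd hone (by decide)


end FatgraphAux

/-- The number of cycles (orbits, including fixed points) of a permutation. -/
def cycleCount {H : Type*} [Fintype H] [DecidableEq H] (σ : Equiv.Perm H) : ℕ :=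
  (Fintype.card H - σ.support.card) + σ.cycleType.card

/-- For a connected fatgraph `(H, σ, a)` (with `σ` the vertex permutation and `a` a
fixed-point-free involution), setting `v`, `e`, `r` to be the numbers of cycles of `σ`,
orbits of `a`, and cycles of `a ∘ σ` respectively, the genus `g` determined by
`2 - 2g = v - e + r` is a non-negative integer. -/
theorem fatgraph_genus_nonneg_integer
    {H : Type*} [Fintype H] [DecidableEq H] [Nonempty H]
    (σ a : Equiv.Perm H)
    (hinv : a * a = 1) (hfpf : ∀ x, a x ≠ x)
    (hconn : ∀ x y : H, ∃ w ∈ Subgroup.closure ({σ, a} : Set (Equiv.Perm H)), w x = y) :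
    ∃ g : ℕ, (cycleCount σ : ℤ) - cycleCount a + cycleCount (a * σ) = 2 - 2 * g := by
  classical
  have horb : orbS ({σ, a} : Set (Equiv.Perm H)) = 1 := by
    rw [orbS, Nat.card_eq_one_iff_unique]
    refine ⟨⟨fun q1 q2 => ?_⟩, ⟨Quotient.mk _ (Classical.arbitrary H)⟩⟩
    refine Quotient.inductionOn₂ q1 q2 fun z w => Quotient.sound ?_
    exact hconn z w
  have hmain := main_ineq a σ
  rw [horb] at hmain
  have h1 : cycleCount σ = ncc σ := cycleCount_eq_ncc σ
  have h2 : cycleCount a = ncc a := cycleCount_eq_ncc a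
  have h3 : cycleCount (a * σ) = ncc (a * σ) := cycleCount_eq_ncc (a * σ)
  obtain ⟨hinv2, hsupp⟩ := involution_card hinv hfpf
  have hca : cycleCount a = Multiset.card a.cycleType := by
    rw [cycleCount, hsupp, Finset.card_univ]
    omega
  have hrel : ∀ π : Equiv.Perm H,
      cycleCount π + π.support.card = Fintype.card H + Multiset.card π.cycleType := by
    intro π
    have := Finset.card_le_univ π.support
    simp only [cycleCount]
    omega
  have e1 := hrel σ
  have e2 := hrel a
  have e3 := hrel (a * σ)
  have s1 := Equiv.Perm.sum_cycleType σ
  have s2 := Equiv.Perm.sum_cycleType a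
  have s3 := Equiv.Perm.sum_cycleType (a * σ)
  obtain ⟨m, hm⟩ := parity_lemma σ a
  rw [s1, s2, s3] at hm
  refine ⟨(2 + cycleCount a - (cycleCount σ + cycleCount (a * σ))) / 2, ?_⟩
  push_cast
  omega
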